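/- With $T$, $e$, $q$, $D$, $R$ as in the quasi-Taylor expansion assumption (T invariant under $G_X$, $T(e+h) = T(e) + D(h) + R(h)$, $D$ homogeneous of degree $q$, $R(h)/\|h\|^q \to 0$): if $D(h) < 0$ for every $h \in \mathrm{span}(e)^{\perp}$ with $h \neq 0$, then there exists a neighborhood of $e$ in $\mathbb{R}^n$ on which $T(y) \leq T(e)$ holds. -/
import Mathlib


open Matrix Filter Set

lemma eval_smul_homog {n q : ℕ} (p : MvPolynomial (Fin n) ℝ) (hp : p.IsHomogeneous q)
    (t : ℝ) (x : Fin n → ℝ) :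
    MvPolynomial.eval (t • x) p = t ^ q * MvPolynomial.eval x p := by
  rw [MvPolynomial.eval_eq', MvPolynomial.eval_eq', Finset.mul_sum]
  apply Finset.sum_congr rfl
  intro d hd
  have hdeg : ∑ i, d i = q := by
    have h1 := hp (MvPolynomial.mem_support_iff.mp hd)
    rw [← h1, Finsupp.weight_apply, Finsupp.sum]
    simp only [smul_eq_mul, Pi.one_apply, mul_one]
    exact (Finset.sum_subset (Finset.subset_univ _) (by simp)).symm
  calc p.coeff d * ∏ i, (t • x) i ^ d i
      = p.coeff d * ∏ i, (t ^ d i * x i ^ d i) := by simp [mul_pow]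
    _ = p.coeff d * ((∏ i, t ^ d i) * ∏ i, x i ^ d i) := by rw [Finset.prod_mul_distrib]
    _ = t ^ q * (p.coeff d * ∏ i, x i ^ d i) := by
        rw [Finset.prod_pow_eq_pow_sum, hdeg]; ring

/-- If a `G_X`-invariant test statistic `T` admits the quasi-Taylor expansion
`T(e+h) = T(e) + D(h) + R(h)` with `D` a homogeneous polynomial of degree `q`,
`R(h)/‖h‖^q → 0`, and `D(h) < 0` for every nonzero `h ⊥ e`, then `T(y) ≤ T(e)` on a
neighborhood of `e`. -/
theorem stmt9 {n k : ℕ} (hn : 2 ≤ n) (hk : k < n)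
    (X : Matrix (Fin n) (Fin k) ℝ)
    (T : (Fin n → ℝ) → ℝ)
    (hTinv : ∀ γ : ℝ, γ ≠ 0 → ∀ (θ : Fin k → ℝ) (y : Fin n → ℝ),
      T (γ • y + X.mulVec θ) = T y)
    (e : Fin n → ℝ) (he : ∑ i, e i ^ 2 = 1)
    (q : ℕ) (hq : 0 < q)
    (D : (Fin n → ℝ) → ℝ)
    (p : MvPolynomial (Fin n) ℝ) (hp : p.IsHomogeneous q)
    (hD : ∀ h : Fin n → ℝ, D h = MvPolynomial.eval h p)
    (R : (Fin n → ℝ) → ℝ)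
    (hTay : ∀ h : Fin n → ℝ, T (e + h) = T e + D h + R h)
    (hR : Tendsto (fun h : Fin n → ℝ => R h / (Real.sqrt (∑ i, h i ^ 2)) ^ q)
      (nhdsWithin 0 {(0 : Fin n → ℝ)}ᶜ) (nhds 0))
    (hDneg : ∀ h : Fin n → ℝ, h ≠ 0 → h ⬝ᵥ e = 0 → D h < 0) :
    ∃ U ∈ nhds e, ∀ y ∈ U, T y ≤ T e := by
  set N : (Fin n → ℝ) → ℝ := fun h => Real.sqrt (∑ i, h i ^ 2) with hNdef
  have hsumnn : ∀ h : Fin n → ℝ, (0:ℝ) ≤ ∑ i, h i ^ 2 :=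
    fun h => Finset.sum_nonneg fun i _ => sq_nonneg _
  have hNnn : ∀ h, 0 ≤ N h := fun h => Real.sqrt_nonneg _
  have hNsq : ∀ h : Fin n → ℝ, N h ^ 2 = ∑ i, h i ^ 2 := fun h => Real.sq_sqrt (hsumnn h)
  have hNpos : ∀ h : Fin n → ℝ, h ≠ 0 → 0 < N h := by
    intro h hne
    obtain ⟨i, hi⟩ : ∃ i, h i ≠ 0 := by
      by_contra hc; push_neg at hc; exact hne (funext hc)
    apply Real.sqrt_pos.mpr
    exact Finset.sum_pos' (fun j _ => sq_nonneg _) ⟨i, Finset.mem_univ i, by positivity⟩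
  have hNsmul : ∀ (t : ℝ) (h : Fin n → ℝ), N (t • h) = |t| * N h := by
    intro t h
    simp only [hNdef, Pi.smul_apply, smul_eq_mul, mul_pow, ← Finset.mul_sum]
    rw [Real.sqrt_mul (sq_nonneg t), Real.sqrt_sq_eq_abs]
  have hee : e ⬝ᵥ e = 1 := by
    rw [← he]; simp [dotProduct, sq]
  have hDhom : ∀ (t : ℝ) (u : Fin n → ℝ), D (t • u) = t ^ q * D u := by
    intro t u; rw [hD, hD, eval_smul_homog p hp]
  have hD0 : D 0 = 0 := by
    have := hDhom 0 0
    rwa [smul_zero, zero_pow hq.ne', zero_mul] at this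
  -- a nonzero vector orthogonal to e
  obtain ⟨v, hv0, hve⟩ : ∃ v : Fin n → ℝ, v ≠ 0 ∧ v ⬝ᵥ e = 0 := by
    by_contra hcon
    push_neg at hcon
    set f : (Fin n → ℝ) →ₗ[ℝ] ℝ :=
      { toFun := fun h => h ⬝ᵥ e
        map_add' := fun a b => add_dotProduct a b e
        map_smul' := fun r a => smul_dotProduct r a e } with hf
    have hinj : Function.Injective f := by
      rw [← LinearMap.ker_eq_bot, LinearMap.ker_eq_bot']
      intro m hm
      by_contra hm0
      exact (hcon m hm0) hm
    have := LinearMap.finrank_le_finrank_of_injective hinj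
    rw [Module.finrank_fin_fun, Module.finrank_self] at this
    omega
  -- compactness: maximum of D on the orthogonal unit sphere
  set K : Set (Fin n → ℝ) := {h | (∑ i, h i ^ 2) = 1 ∧ h ⬝ᵥ e = 0} with hKdef
  have hdotc : Continuous fun y : Fin n → ℝ => y ⬝ᵥ e := by
    simp only [dotProduct]
    exact continuous_finset_sum _ fun i _ => (continuous_apply i).mul continuous_const
  have hsumc : Continuous fun h : Fin n → ℝ => ∑ i, h i ^ 2 :=
    continuous_finset_sum _ fun i _ => (continuous_apply i).pow 2
  have hKcl : IsClosed K :=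
    (isClosed_eq hsumc continuous_const).inter (isClosed_eq hdotc continuous_const)
  have hKb : Bornology.IsBounded K := by
    apply (Metric.isBounded_closedBall (x := (0 : Fin n → ℝ)) (r := 1)).subset
    intro h hh
    rw [Metric.mem_closedBall, dist_zero_right]
    have hle : ‖h‖ ≤ N h := by
      rw [pi_norm_le_iff_of_nonneg (hNnn h)]
      intro i
      rw [Real.norm_eq_abs, ← Real.sqrt_sq_eq_abs]
      exact Real.sqrt_le_sqrt (Finset.single_le_sum (fun j _ => sq_nonneg (h j)) (Finset.mem_univ i))
    calc ‖h‖ ≤ N h := hle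
      _ = 1 := by rw [hNdef]; simp only; rw [hh.1, Real.sqrt_one]
  have hKcomp : IsCompact K := Metric.isCompact_of_isClosed_isBounded hKcl hKb
  have hKne : K.Nonempty := by
    refine ⟨(N v)⁻¹ • v, ?_, ?_⟩
    · have hNv := hNpos v hv0
      simp only [Pi.smul_apply, smul_eq_mul, mul_pow, ← Finset.mul_sum]
      rw [← hNsq v]
      field_simp
    · rw [smul_dotProduct, hve, smul_zero]
  have hDc : Continuous D := by
    have : D = fun h => MvPolynomial.eval h p := funext hD
    rw [this]; exact MvPolynomial.continuous_eval p
  obtain ⟨x, hxK, hxmax⟩ := hKcomp.exists_isMaxOn hKne hDc.continuousOn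
  set c : ℝ := -D x with hcdef
  have hx0 : x ≠ 0 := by
    intro hx
    rw [hx] at hxK
    have h1 := hxK.1
    simp at h1
  have hc : 0 < c := by
    have := hDneg x hx0 hxK.2
    simp only [hcdef]; linarith
  have hDle : ∀ h : Fin n → ℝ, h ⬝ᵥ e = 0 → D h ≤ -c * N h ^ q := by
    intro h hhe
    by_cases hz : h = 0
    · rw [hz, hD0]
      simp only [hNdef]
      rw [show ∑ i, (0:Fin n → ℝ) i ^ 2 = 0 by simp, Real.sqrt_zero, zero_pow hq.ne', mul_zero]
    · have ht : 0 < N h := hNpos h hz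
      set u : Fin n → ℝ := (N h)⁻¹ • h with hu
      have huK : u ∈ K := by
        constructor
        · simp only [hu, Pi.smul_apply, smul_eq_mul, mul_pow, ← Finset.mul_sum]
          rw [← hNsq h]; field_simp
        · rw [hu, smul_dotProduct, hhe, smul_zero]
      have hDu : D u ≤ -c := by
        have h2 : D u ≤ D x := hxmax huK
        simp only [hcdef]; linarith
      have hhu : h = N h • u := by
        rw [hu, smul_smul, mul_inv_cancel₀ ht.ne', one_smul]
      calc D h = N h ^ q * D u := by conv_lhs => rw [hhu, hDhom]
        _ ≤ N h ^ q * (-c) := by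
            apply mul_le_mul_of_nonneg_left hDu (pow_nonneg (hNnn h) q)
        _ = -c * N h ^ q := by ring
  -- remainder bound
  rw [Metric.tendsto_nhdsWithin_nhds] at hR
  obtain ⟨δ, hδ, hRδ⟩ := hR (c / 2) (half_pos hc)
  have hRbound : ∀ h : Fin n → ℝ, h ≠ 0 → dist h 0 < δ → |R h| ≤ c / 2 * N h ^ q := by
    intro h hne hd
    have hNq : 0 < N h ^ q := pow_pos (hNpos h hne) q
    have := hRδ (by simpa using hne) hd
    rw [Real.dist_eq, sub_zero, abs_div, abs_of_pos hNq] at this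
    rw [div_lt_iff₀ hNq] at this
    exact le_of_lt this
  -- key inequality
  have key : ∀ h : Fin n → ℝ, h ⬝ᵥ e = 0 → dist h 0 < δ → T (e + h) ≤ T e := by
    intro h hhe hd
    by_cases hz : h = 0
    · rw [hz, add_zero]
    · rw [hTay h]
      have h1 := hDle h hhe
      have h2 := hRbound h hz hd
      have h3 : R h ≤ c / 2 * N h ^ q := le_trans (le_abs_self _) h2
      have hNq : 0 < N h ^ q := pow_pos (hNpos h hz) q
      nlinarith
  -- transfer to a neighborhood of e via scaling invariance
  have hg0 : (e ⬝ᵥ e)⁻¹ • e - e = (0 : Fin n → ℝ) := by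
    rw [hee, inv_one, one_smul, sub_self]
  have hgc : ContinuousAt (fun y : Fin n → ℝ => (y ⬝ᵥ e)⁻¹ • y - e) e := by
    apply ContinuousAt.sub _ continuousAt_const
    exact (hdotc.continuousAt.inv₀ (by rw [hee]; norm_num)).smul continuousAt_id
  have h1 : ∀ᶠ y in nhds e, dist ((y ⬝ᵥ e)⁻¹ • y - e) 0 < δ := by
    have h : Tendsto (fun y : Fin n → ℝ => (y ⬝ᵥ e)⁻¹ • y - e) (nhds e) (nhds 0) := by
      have h := hgc.tendsto
      rwa [hg0] at h
    exact Metric.tendsto_nhds.mp h δ hδ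
  have h2 : ∀ᶠ y in nhds e, y ⬝ᵥ e ≠ 0 := by
    have h : Tendsto (fun y : Fin n → ℝ => y ⬝ᵥ e) (nhds e) (nhds 1) := by
      have := hdotc.continuousAt (x := e)
      rwa [ContinuousAt, hee] at this
    exact h.eventually_ne one_ne_zero
  refine ⟨{y | dist ((y ⬝ᵥ e)⁻¹ • y - e) 0 < δ ∧ y ⬝ᵥ e ≠ 0}, h1.and h2, ?_⟩
  rintro y ⟨hy1, hy2⟩
  set γ : ℝ := y ⬝ᵥ e with hγ
  set h : Fin n → ℝ := γ⁻¹ • y - e with hh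
  have hhe : h ⬝ᵥ e = 0 := by
    rw [hh, sub_dotProduct, smul_dotProduct, ← hγ, hee, smul_eq_mul,
      inv_mul_cancel₀ hy2, sub_self]
  have hTy : T y = T (e + h) := by
    have heq : e + h = γ⁻¹ • y := by rw [hh]; abel
    rw [heq]
    have := hTinv γ hy2 0 (γ⁻¹ • y)
    rw [Matrix.mulVec_zero, add_zero, smul_smul, mul_inv_cancel₀ hy2, one_smul] at this
    exact this
  rw [hTy]
  exact key h hhe hy1
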